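/- Let p be a prime, d ≥ 0, and λ = (λ_1, λ_2) a composition with λ_2 ≠ 0 and p^d ≤ λ_2 < p^{d+1}. For a natural number a with 0 ≤ a ≤ λ_1, all the binomial coefficients C(a + p^{d'}, p^{d'}) for 0 ≤ d' ≤ d are divisible by p if and only if the base-p digits of a in positions 0 through d are all equal to p-1. -/

import Mathlib

open Nat Finset

lemma key_digit_dvd (p k a : ℕ) (hp : p.Prime) :
    p ∣ Nat.choose (a + p ^ k) (p ^ k) ↔ a / p ^ k % p = p - 1 := by
  have hp1 : 1 < p := hp.one_lt
  set b := max (Nat.log p (a + p ^ k) + 1) (k + 2) with hb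
  have hnb : Nat.log p (a + p ^ k) < b := lt_of_lt_of_le (lt_add_one _) (le_max_left _ _)
  have hm := Nat.Prime.emultiplicity_choose' hp hnb
  constructor
  · intro hdvd
    have h1 : (1 : ℕ∞) ≤ emultiplicity p (Nat.choose (a + p ^ k) (p ^ k)) := by
      exact_mod_cast le_emultiplicity_of_pow_dvd (k := 1) (by simpa using hdvd)
    rw [hm] at h1
    have hcard : 1 ≤ #{i ∈ Finset.Ico 1 b | p ^ i ≤ p ^ k % p ^ i + a % p ^ i} := by
      exact_mod_cast h1
    obtain ⟨i, hi⟩ := Finset.card_pos.mp hcard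
    simp only [Finset.mem_filter, Finset.mem_Ico] at hi
    obtain ⟨⟨hi1, hib⟩, hile⟩ := hi
    have hki : k < i := by
      by_contra h
      push_neg at h
      have h0 : p ^ k % p ^ i = 0 := Nat.eq_zero_of_dvd_of_lt (Nat.dvd_mod_iff dvd_rfl |>.mpr (pow_dvd_pow p h)) (Nat.mod_lt _ (pow_pos hp.pos i))
      have := Nat.mod_lt a (pow_pos hp.pos i)
      have := pow_pos hp.pos i
      omega
    have hpk : p ^ k % p ^ i = p ^ k :=
      Nat.mod_eq_of_lt (Nat.pow_lt_pow_right hp1 hki)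
    rw [hpk] at hile
    have hmod : p ^ i - p ^ k ≤ a % p ^ i := by
      rw [Nat.sub_le_iff_le_add]; omega
    have hlt : a % p ^ i < p ^ i := Nat.mod_lt _ (pow_pos hp.pos i)
    have hpow : p ^ i = p ^ k * p ^ (i - k) := by
      rw [← pow_add]; congr 1; omega
    have hdivlt : a % p ^ i / p ^ k < p ^ (i - k) :=
      Nat.div_lt_of_lt_mul (hpow ▸ hlt)
    have hdivge : p ^ (i - k) - 1 ≤ a % p ^ i / p ^ k := by
      rw [Nat.le_div_iff_mul_le (pow_pos hp.pos k)]
      have : (p ^ (i - k) - 1) * p ^ k = p ^ i - p ^ k := by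
        rw [Nat.sub_mul, one_mul, ← pow_add]
        congr 2; omega
      omega
    have heq : a % p ^ i / p ^ k = p ^ (i - k) - 1 := by omega
    have hmm : a / p ^ k % p ^ (i - k) = p ^ (i - k) - 1 := by
      rw [← Nat.mod_mul_right_div_self, ← pow_add]
      rw [show k + (i - k) = i by omega]
      exact heq
    have hfin : a / p ^ k % p = (a / p ^ k % p ^ (i - k)) % p :=
      (Nat.mod_mod_of_dvd _ (dvd_pow_self p (by omega : i - k ≠ 0))).symm
    rw [hfin, hmm]
    have hj : i - k = (i - k - 1) + 1 := by omega
    have hps : p ^ (i - k) = p ^ (i - k - 1) * p := by conv_lhs => rw [hj, pow_succ]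
    have hp0 : 1 ≤ p ^ (i - k - 1) := Nat.one_le_pow _ _ hp.pos
    have hY : (p ^ (i - k - 1) - 1) * p = p ^ (i - k) - p := by
      rw [Nat.sub_mul, one_mul, ← hps]
    have hX : p ≤ p ^ (i - k) := by
      rw [hps]; exact Nat.le_mul_of_pos_left p hp0
    have : p ^ (i - k) - 1 = (p - 1) + (p ^ (i - k - 1) - 1) * p := by omega
    rw [this, Nat.add_mul_mod_self_right, Nat.mod_eq_of_lt (by omega)]
  · intro hdig
    have hmem : k + 1 ∈ {i ∈ Finset.Ico 1 b | p ^ i ≤ p ^ k % p ^ i + a % p ^ i} := by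
      simp only [Finset.mem_filter, Finset.mem_Ico]
      refine ⟨⟨by omega, lt_of_lt_of_le (by omega) (le_max_right _ _)⟩, ?_⟩
      have hpk : p ^ k % p ^ (k + 1) = p ^ k :=
        Nat.mod_eq_of_lt (Nat.pow_lt_pow_right hp1 (lt_add_one k))
      have hdd : a % p ^ (k + 1) / p ^ k = p - 1 := by
        rw [← hdig, ← Nat.mod_mul_right_div_self, ← pow_succ]
      have hle : (p - 1) * p ^ k ≤ a % p ^ (k + 1) := by
        calc (p - 1) * p ^ k = a % p ^ (k + 1) / p ^ k * p ^ k := by rw [hdd]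
        _ ≤ a % p ^ (k + 1) := Nat.div_mul_le_self _ _
      have h2 : (p - 1) * p ^ k = p ^ (k + 1) - p ^ k := by
        rw [Nat.sub_mul, one_mul, pow_succ, mul_comm]
      have h3 : p ^ k ≤ p ^ (k + 1) := Nat.pow_le_pow_right hp.pos (by omega)
      rw [hpk]
      omega
    have hcard : 1 ≤ #{i ∈ Finset.Ico 1 b | p ^ i ≤ p ^ k % p ^ i + a % p ^ i} :=
      Finset.card_pos.mpr ⟨k + 1, hmem⟩
    have h1 : (1 : ℕ∞) ≤ emultiplicity p (Nat.choose (a + p ^ k) (p ^ k)) := by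
      rw [hm]; exact_mod_cast hcard
    simpa using pow_dvd_of_le_emultiplicity (k := 1) h1

/-- For `λ = (λ₁, λ₂)` with `λ₂ ≠ 0`, `p^d ≤ λ₂ < p^{d+1}`, and `a ≤ λ₁`:
all binomial coefficients `C(a + p^{d'}, p^{d'})` for `d' ≤ d` are divisible by `p`
iff the base-`p` digits of `a` in positions `0,…,d` all equal `p-1`. -/
theorem stmt_13 (p d lam₁ lam₂ a : ℕ) (hp : p.Prime) (hl : lam₂ ≠ 0)
    (hd₁ : p ^ d ≤ lam₂) (hd₂ : lam₂ < p ^ (d + 1)) (ha : a ≤ lam₁) :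
    (∀ d' : ℕ, d' ≤ d → p ∣ Nat.choose (a + p ^ d') (p ^ d')) ↔
      ∀ i : ℕ, i ≤ d → a / p ^ i % p = p - 1 := by
  constructor
  · intro h i hi
    exact (key_digit_dvd p i a hp).mp (h i hi)
  · intro h d' hd'
    exact (key_digit_dvd p d' a hp).mpr (h d' hd')
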